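/- In the by-player-anywhere-same game, if the formula is blatantly true under the current partial assignment and there are m unassigned variables remaining, then the player to move wins if and only if m is odd (equivalently, the player who makes the final move wins, and no further move can be illegal). -/

import Mathlib

/-- Boolean formulas: variables, negation, conjunction of a list, disjunction of a list. -/
inductive Fm : Type where
  | var  : ℕ → Fm
  | neg  : Fm → Fm
  | conj : List Fm → Fm
  | disj : List Fm → Fm

mutual
/-- `f` is blatantly false under the partial assignment `ρ`. -/
inductive BFalse (ρ : ℕ → Option Bool) : Fm → Prop where
  | var  {i} : ρ i = some false → BFalse ρ (.var i)
  | neg  {φ} : BTrue ρ φ → BFalse ρ (.neg φ)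
  | disj {l} : (∀ φ ∈ l, BFalse ρ φ) → BFalse ρ (.disj l)
  | conj {l φ} : φ ∈ l → BFalse ρ φ → BFalse ρ (.conj l)

/-- `f` is blatantly true under the partial assignment `ρ`. -/
inductive BTrue (ρ : ℕ → Option Bool) : Fm → Prop where
  | var  {i} : ρ i = some true → BTrue ρ (.var i)
  | neg  {φ} : BFalse ρ φ → BTrue ρ (.neg φ)
  | disj {l φ} : φ ∈ l → BTrue ρ φ → BTrue ρ (.disj l)
  | conj {l} : (∀ φ ∈ l, BTrue ρ φ) → BTrue ρ (.conj l)
end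

/-- Standard Boolean evaluation under a total assignment. -/
def Fm.eval (σ : ℕ → Bool) : Fm → Bool
  | .var i  => σ i
  | .neg φ  => !(φ.eval σ)
  | .conj l => l.attach.all fun ⟨φ, _⟩ => φ.eval σ
  | .disj l => l.attach.any fun ⟨φ, _⟩ => φ.eval σ

/-- The total assignment `σ` extends the partial assignment `ρ`. -/
def ExtendsPA (ρ : ℕ → Option Bool) (σ : ℕ → Bool) : Prop :=
  ∀ i b, ρ i = some b → σ i = b

/-- Update a partial assignment at one variable. -/
def updPA (ρ : ℕ → Option Bool) (x : ℕ) (b : Bool) : ℕ → Option Bool :=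
  fun y => if y = x then some b else ρ y

/-- By-player-anywhere-same: the player `t` to move (who must assign the value `t`
to some unassigned variable `x < N` without making `f` blatantly false) wins,
where the fuel counts the remaining unassigned variables.  A player with no
legal move loses; the maker of the last move wins. -/
def BPASWin (f : Fm) (N : ℕ) : ℕ → Bool → (ℕ → Option Bool) → Prop
  | 0, _, _ => False
  | m + 1, t, ρ => ∃ x < N, ρ x = none ∧ ¬ BFalse (updPA ρ x t) f ∧
      ¬ BPASWin f N m (!t) (updPA ρ x t)

lemma mono_aux (ρ ρ' : ℕ → Option Bool) (h : ∀ i b, ρ i = some b → ρ' i = some b) :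
    ∀ {f} (_ : BTrue ρ f), BTrue ρ' f := by
  intro f hf
  refine BTrue.rec (ρ := ρ) (motive_1 := fun g _ => BFalse ρ' g)
    (motive_2 := fun g _ => BTrue ρ' g) ?_ ?_ ?_ ?_ ?_ ?_ ?_ ?_ hf
  · intro i hi; exact BFalse.var (h i false hi)
  · intro φ _ ih; exact BFalse.neg ih
  · intro l _ ih; exact BFalse.disj ih
  · intro l φ hmem _ ih; exact BFalse.conj hmem ih
  · intro i hi; exact BTrue.var (h i true hi)
  · intro φ _ ih; exact BTrue.neg ih
  · intro l φ hmem _ ih; exact BTrue.disj hmem ih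
  · intro l _ ih; exact BTrue.conj ih

lemma excl_aux (ρ : ℕ → Option Bool) : ∀ {f} (_ : BTrue ρ f), ¬ BFalse ρ f := by
  intro f hf
  refine BTrue.rec (ρ := ρ) (motive_1 := fun g _ => ¬ BTrue ρ g)
    (motive_2 := fun g _ => ¬ BFalse ρ g) ?_ ?_ ?_ ?_ ?_ ?_ ?_ ?_ hf
  · intro i hi ht; cases ht with | var h => simp [hi] at h
  · intro φ _ ih ht; cases ht with | neg h => exact ih h
  · intro l _ ih ht; cases ht with | disj hmem h => exact ih _ hmem h
  · intro l φ hmem _ ih ht; cases ht with | conj h => exact ih (h φ hmem)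
  · intro i hi ht; cases ht with | var h => simp [hi] at h
  · intro φ _ ih ht; cases ht with | neg h => exact ih h
  · intro l φ hmem _ ih ht; cases ht with | disj h => exact ih (h φ hmem)
  · intro l _ ih ht; cases ht with | conj hmem h => exact ih _ hmem h

lemma bpas_main (f : Fm) (N : ℕ) : ∀ m (ρ : ℕ → Option Bool) (t : Bool),
    BTrue ρ f → m = ((Finset.range N).filter fun x => ρ x = none).card →
    (BPASWin f N m t ρ ↔ Odd m) := by
  intro m
  induction m with
  | zero => intro ρ t _ _; simp [BPASWin]
  | succ m ih =>
    intro ρ t hbt hm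
    have hS : ((Finset.range N).filter fun x => ρ x = none).Nonempty := by
      rw [← Finset.card_pos, ← hm]; omega
    obtain ⟨x0, hx0⟩ := hS
    simp only [Finset.mem_filter, Finset.mem_range] at hx0
    have key : ∀ x b, x < N → ρ x = none →
        BTrue (updPA ρ x b) f ∧
        m = ((Finset.range N).filter fun y => updPA ρ x b y = none).card := by
      intro x b hxN hx
      constructor
      · exact mono_aux ρ _ (fun i c hic => by
          unfold updPA; rcases eq_or_ne i x with rfl|h
          · rw [hx] at hic; exact absurd hic (by simp)
          · simp [h, hic]) hbt
      · have : ((Finset.range N).filter fun y => updPA ρ x b y = none)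
            = ((Finset.range N).filter fun y => ρ y = none).erase x := by
          refine Finset.ext fun y => ?_
          simp only [Finset.mem_filter, Finset.mem_range, Finset.mem_erase]; simp only [updPA]
          constructor
          · intro ⟨h1, h2⟩
            rcases eq_or_ne y x with rfl|h
            · simp at h2
            · simp [h] at h2; exact ⟨h, h1, h2⟩
          · intro ⟨h1, h2, h3⟩; exact ⟨h2, by simp [h1, h3]⟩
        rw [this, Finset.card_erase_of_mem (by simp [Finset.mem_filter, hx, hxN]), ← hm]
        rfl
    constructor
    · rintro ⟨x, hxN, hx, _, hnw⟩
      obtain ⟨hbt', hm'⟩ := key x t hxN hx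
      rw [ih _ (!t) hbt' hm'] at hnw
      rw [Nat.odd_add_one]
      simpa using hnw
    · intro hodd
      refine ⟨x0, hx0.1, hx0.2, ?_, ?_⟩
      · exact excl_aux _ (key x0 t hx0.1 hx0.2).1
      · obtain ⟨hbt', hm'⟩ := key x0 t hx0.1 hx0.2
        rw [ih _ (!t) hbt' hm']
        rw [Nat.odd_add_one] at hodd
        simpa using hodd


theorem bpas_blatantly_true_parity (f : Fm) (N m : ℕ) (ρ : ℕ → Option Bool) (t : Bool)
    (hbt : BTrue ρ f)
    (hm : m = ((Finset.range N).filter fun x => ρ x = none).card) :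
    (BPASWin f N m t ρ ↔ Odd m) := bpas_main f N m ρ t hbt hm
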